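/- Let e, f ∈ ℤ × ℤ with det(e,f) ≠ 0. Then the set of integer points z that can be written as z = α·e + β·f with real numbers α, β ∈ [0,1] equals exactly {(0,0), e, f, e+f} if and only if det(e,f) = ±1. -/

import Mathlib

/-- The determinant of two integer vectors in the plane. -/
def det (x y : ℤ × ℤ) : ℤ := x.1 * y.2 - x.2 * y.1

lemma det_real_eq (e f z : ℤ × ℤ) (α β : ℝ)
    (h1 : (z.1 : ℝ) = α * e.1 + β * f.1) (h2 : (z.2 : ℝ) = α * e.2 + β * f.2) :
    ((det z f : ℝ) = α * det e f) ∧ ((det e z : ℝ) = β * det e f) := by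
  constructor <;> · simp only [det]; push_cast; rw [h1, h2]; ring

lemma mem_char (e f z : ℤ × ℤ) (h : det e f ≠ 0) :
    (∃ α β : ℝ, α ∈ Set.Icc (0:ℝ) 1 ∧ β ∈ Set.Icc (0:ℝ) 1 ∧
      (z.1 : ℝ) = α * e.1 + β * f.1 ∧ (z.2 : ℝ) = α * e.2 + β * f.2) ↔
    ((det z f : ℝ)/(det e f) ∈ Set.Icc (0:ℝ) 1 ∧ (det e z : ℝ)/(det e f) ∈ Set.Icc (0:ℝ) 1) := by
  have hD : (det e f : ℝ) ≠ 0 := Int.cast_ne_zero.mpr h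
  constructor
  · rintro ⟨α, β, hα, hβ, h1, h2⟩
    obtain ⟨ha, hb⟩ := det_real_eq e f z α β h1 h2
    rw [ha, hb, mul_div_cancel_right₀ _ hD, mul_div_cancel_right₀ _ hD]
    exact ⟨hα, hβ⟩
  · rintro ⟨hα, hβ⟩
    refine ⟨_, _, hα, hβ, ?_, ?_⟩
    · field_simp
      push_cast [det]
      ring
    · field_simp
      push_cast [det]
      ring

/-- For a pair of integer vectors with nonzero determinant, the set of integer points in
the closed parallelogram they span consists exactly of its four vertices if and only if
the determinant is `±1`. -/
theorem lattice_points_eq_vertices_iff_unimodular (e f : ℤ × ℤ) (h : det e f ≠ 0) :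
    {z : ℤ × ℤ | ∃ α β : ℝ, α ∈ Set.Icc (0 : ℝ) 1 ∧ β ∈ Set.Icc (0 : ℝ) 1 ∧
        (z.1 : ℝ) = α * e.1 + β * f.1 ∧ (z.2 : ℝ) = α * e.2 + β * f.2}
      = {(0, 0), e, f, e + f} ↔ (det e f = 1 ∨ det e f = -1) := by
  have hD : (det e f : ℝ) ≠ 0 := Int.cast_ne_zero.mpr h
  constructor
  · intro hset
    by_contra hne
    push_neg at hne
    obtain ⟨hne1, hne2⟩ := hne
    -- find z₀ not in the lattice generated by e, f
    obtain ⟨z₀, hz₀⟩ : ∃ z₀ : ℤ × ℤ, ¬ (det e f ∣ det z₀ f) ∨ ¬ (det e f ∣ det e z₀) := by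
      by_cases h1 : (det e f) ∣ (Int.gcd f.1 f.2 : ℤ)
      · by_cases h2 : (det e f) ∣ (Int.gcd e.1 e.2 : ℤ)
        · exfalso
          have hf1 : det e f ∣ f.1 := h1.trans (Int.gcd_dvd_left _ _)
          have hf2 : det e f ∣ f.2 := h1.trans (Int.gcd_dvd_right _ _)
          have he1 : det e f ∣ e.1 := h2.trans (Int.gcd_dvd_left _ _)
          have he2 : det e f ∣ e.2 := h2.trans (Int.gcd_dvd_right _ _)
          have hsq : det e f * det e f ∣ det e f := by
            have := dvd_sub (mul_dvd_mul he1 hf2) (mul_dvd_mul he2 hf1)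
            simpa [det] using this
          obtain ⟨k, hk⟩ := hsq
          have hk1 : det e f * k = 1 := by
            have : det e f * (det e f * k) = det e f * 1 := by rw [mul_one]; linarith [hk]
            exact mul_left_cancel₀ h (by linarith [this])
          have := Int.isUnit_iff.mp (IsUnit.of_mul_eq_one _ hk1)
          tauto
        · refine ⟨(Int.gcdB e.1 (-e.2), Int.gcdA e.1 (-e.2)), Or.inr ?_⟩
          have hval : det e (Int.gcdB e.1 (-e.2), Int.gcdA e.1 (-e.2)) = (Int.gcd e.1 e.2 : ℤ) := by
            have := Int.gcd_eq_gcd_ab e.1 (-e.2)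
            simp only [det]
            rw [Int.gcd_neg] at this
            linarith [this]
          rw [hval]; exact h2
      · refine ⟨(Int.gcdA f.2 (-f.1), Int.gcdB f.2 (-f.1)), Or.inl ?_⟩
        have hval : det (Int.gcdA f.2 (-f.1), Int.gcdB f.2 (-f.1)) f = (Int.gcd f.1 f.2 : ℤ) := by
          have := Int.gcd_eq_gcd_ab f.2 (-f.1)
          simp only [det]
          rw [Int.gcd_neg, Int.gcd_comm] at this
          linarith [this]
        rw [hval]; exact h1
    set D := det e f with hDdef
    set a := det z₀ f with hadef
    set b := det e z₀ with hbdef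
    set m : ℤ := ⌊(a:ℝ)/(D:ℝ)⌋ with hm
    set n : ℤ := ⌊(b:ℝ)/(D:ℝ)⌋ with hn
    set z' : ℤ × ℤ := (z₀.1 - m*e.1 - n*f.1, z₀.2 - m*e.2 - n*f.2) with hz'
    have hdet1 : det z' f = a - m * D := by simp only [hz', hadef, hDdef, det]; ring
    have hdet2 : det e z' = b - n * D := by simp only [hz', hbdef, hDdef, det]; ring
    have hfr1 : ((det z' f : ℤ):ℝ)/(D:ℝ) = Int.fract ((a:ℝ)/(D:ℝ)) := by
      rw [hdet1, Int.fract]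
      push_cast
      rw [sub_div, mul_div_assoc, div_self hD, mul_one]
    have hfr2 : ((det e z' : ℤ):ℝ)/(D:ℝ) = Int.fract ((b:ℝ)/(D:ℝ)) := by
      rw [hdet2, Int.fract]
      push_cast
      rw [sub_div, mul_div_assoc, div_self hD, mul_one]
    have hmem : z' ∈ {z : ℤ × ℤ | ∃ α β : ℝ, α ∈ Set.Icc (0 : ℝ) 1 ∧ β ∈ Set.Icc (0 : ℝ) 1 ∧
        (z.1 : ℝ) = α * e.1 + β * f.1 ∧ (z.2 : ℝ) = α * e.2 + β * f.2} := by
      rw [Set.mem_setOf_eq, mem_char e f z' h]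
      constructor
      · rw [hfr1]
        exact ⟨Int.fract_nonneg _, le_of_lt (Int.fract_lt_one _)⟩
      · rw [hfr2]
        exact ⟨Int.fract_nonneg _, le_of_lt (Int.fract_lt_one _)⟩
    rw [hset] at hmem
    have hlt1 : Int.fract ((a:ℝ)/(D:ℝ)) < 1 := Int.fract_lt_one _
    have hlt2 : Int.fract ((b:ℝ)/(D:ℝ)) < 1 := Int.fract_lt_one _
    rcases hmem with h0 | he | hf' | hef
    · -- z' = (0,0)
      have e1 : det z' f = 0 := by rw [h0]; simp [det]
      have e2 : det e z' = 0 := by rw [h0]; simp [det]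
      rw [hdet1] at e1
      rw [hdet2] at e2
      rcases hz₀ with hc | hc
      · exact hc ⟨m, by linarith⟩
      · exact hc ⟨n, by linarith⟩
    · have e1 : det z' f = D := by rw [he]
      rw [← hfr1, e1, div_self hD] at hlt1
      exact lt_irrefl _ hlt1
    · have e2 : det e z' = D := by rw [hf']
      rw [← hfr2, e2, div_self hD] at hlt2
      exact lt_irrefl _ hlt2
    · have e1 : det z' f = D := by rw [hef]; simp only [det, hDdef, Prod.fst_add, Prod.snd_add]; ring
      rw [← hfr1, e1, div_self hD] at hlt1
      exact lt_irrefl _ hlt1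
  · intro hD1
    ext z
    simp only [Set.mem_setOf_eq, Set.mem_insert_iff, Set.mem_singleton_iff]
    constructor
    · rintro ⟨α, β, hα, hβ, h1, h2⟩
      obtain ⟨ha, hb⟩ := det_real_eq e f z α β h1 h2
      have hαval : α = ((det z f * det e f : ℤ) : ℝ) := by
        rcases hD1 with h' | h' <;> rw [h'] at ha ⊢ <;> push_cast at ha ⊢ <;> linarith
      have hβval : β = ((det e z * det e f : ℤ) : ℝ) := by
        rcases hD1 with h' | h' <;> rw [h'] at hb ⊢ <;> push_cast at hb ⊢ <;> linarith
      set m := det z f * det e f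
      set n := det e z * det e f
      obtain ⟨hα0, hα1⟩ := hα
      obtain ⟨hβ0, hβ1⟩ := hβ
      rw [hαval] at hα0 hα1 h1 h2
      rw [hβval] at hβ0 hβ1 h1 h2
      have hm0 : (0:ℤ) ≤ m := by exact_mod_cast hα0
      have hm1 : m ≤ 1 := by exact_mod_cast hα1
      have hn0 : (0:ℤ) ≤ n := by exact_mod_cast hβ0
      have hn1 : n ≤ 1 := by exact_mod_cast hβ1
      have hz1 : z.1 = m * e.1 + n * f.1 := by exact_mod_cast h1
      have hz2 : z.2 = m * e.2 + n * f.2 := by exact_mod_cast h2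
      have hm01 : m = 0 ∨ m = 1 := by omega
      have hn01 : n = 0 ∨ n = 1 := by omega
      rcases hm01 with hm | hm <;> rcases hn01 with hn | hn <;>
        rw [hm, hn] at hz1 hz2 <;> simp at hz1 hz2 <;>
        simp [Prod.ext_iff, hz1, hz2]
    · rintro (rfl | rfl | rfl | rfl)
      · exact ⟨0, 0, by norm_num, by norm_num, by norm_num, by norm_num⟩
      · exact ⟨1, 0, by norm_num, by norm_num, by norm_num, by norm_num⟩
      · exact ⟨0, 1, by norm_num, by norm_num, by norm_num, by norm_num⟩
      · exact ⟨1, 1, by norm_num, by norm_num, by rw [Prod.fst_add]; push_cast; ring, by rw [Prod.snd_add]; push_cast; ring⟩
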